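/- Let F_q be a finite field and let C ⊆ F_q(z)^n be a convolutional code of dimension k and degree δ, with k < n. Then the dual code C^⊥ = { y ∈ F_q(z)^n : Σ_{i=1}^n x_i y_i = 0 for all x ∈ C } is a convolutional code of length n and dimension n−k, and the degree of C^⊥ equals δ; that is, for any basic generator matrix H of C^⊥, the maximum of the degrees of the (n−k)×(n−k) minors of H equals δ. -/

import Mathlib

open Polynomial Finset

section Helpers
set_option linter.unusedSectionVars false

variable {R : Type*} [CommRing R] {A : Type*} [CommRing A] [Algebra R A]
variable {n : ℕ} {ι : Type*} [Fintype ι] [DecidableEq ι]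

/-- The rows of a basis of `R^n` pair to the identity with the "dual rows". -/
lemma basis_pair_ortho (B : Module.Basis ι R (Fin n → R)) (a b : ι) :
    ∑ j, B a j * B.coord b (Pi.basisFun R (Fin n) j) = if a = b then 1 else 0 := by
  classical
  have h1 : ∑ j, B a j * B.coord b (Pi.basisFun R (Fin n) j)
      = B.coord b (∑ j, B a j • Pi.basisFun R (Fin n) j) := by
    rw [map_sum]
    exact Finset.sum_congr rfl fun j _ => by rw [map_smul, smul_eq_mul]
  have h2 : ∑ j, B a j • Pi.basisFun R (Fin n) j = B a := by
    have := Module.Basis.sum_repr (Pi.basisFun R (Fin n)) (B a)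
    simpa [Pi.basisFun_repr] using this
  rw [h1, h2]
  simp [Module.Basis.coord_apply, Module.Basis.repr_self, Finsupp.single_apply]

/-- Separation: if `y` pairs to zero with the lift of every basis row, `y = 0`. -/
lemma basis_pair_sep (B : Module.Basis ι R (Fin n → R)) (y : Fin n → A)
    (hy : ∀ a, ∑ j, algebraMap R A (B a j) * y j = 0) : y = 0 := by
  classical
  funext j0
  have hv : (Pi.single j0 (1:R) : Fin n → R)
      = ∑ a, (B.repr (Pi.single j0 1)) a • B a := (Module.Basis.sum_repr B _).symm
  have h0 : y j0 = ∑ j, algebraMap R A ((Pi.single j0 (1:R) : Fin n → R) j) * y j := by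
    simp [Pi.single_apply, apply_ite (algebraMap R A), ite_mul]
  rw [h0]
  have h1 : ∀ j, ((Pi.single j0 (1:R) : Fin n → R)) j
      = ∑ a, (B.repr (Pi.single j0 1)) a * B a j := by
    intro j
    conv_lhs => rw [hv]
    simp [Finset.sum_apply]
  calc ∑ j, algebraMap R A ((Pi.single j0 (1:R) : Fin n → R) j) * y j
      = ∑ j, ∑ a, algebraMap R A ((B.repr (Pi.single j0 1)) a) *
          (algebraMap R A (B a j) * y j) := by
        refine Finset.sum_congr rfl fun j _ => ?_
        rw [h1 j, map_sum, Finset.sum_mul]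
        exact Finset.sum_congr rfl fun a _ => by rw [map_mul, mul_assoc]
    _ = ∑ a, algebraMap R A ((B.repr (Pi.single j0 1)) a) *
          (∑ j, algebraMap R A (B a j) * y j) := by
        rw [Finset.sum_comm]
        exact Finset.sum_congr rfl fun a _ => by rw [Finset.mul_sum]
    _ = 0 := by simp [hy]

/-- Expansion of a vector over the "dual rows". -/
lemma basis_pair_expand (B : Module.Basis ι R (Fin n → R)) (W : ι → Fin n → R)
    (hW : ∀ a b, ∑ j, B a j * W b j = if a = b then 1 else 0)
    (y : Fin n → A) (j0 : Fin n) :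
    y j0 = ∑ p, (∑ j, algebraMap R A (B p j) * y j) * algebraMap R A (W p j0) := by
  classical
  set c : ι → A := fun p => ∑ j, algebraMap R A (B p j) * y j with hc
  have hz : (fun j1 => y j1 - ∑ p, c p * algebraMap R A (W p j1)) = 0 := by
    refine basis_pair_sep B _ fun a => ?_
    have key : ∀ p, ∑ j, algebraMap R A (B a j) * algebraMap R A (W p j)
        = if a = p then 1 else 0 := by
      intro p
      rw [← map_one (algebraMap R A), ← map_zero (algebraMap R A), ← apply_ite, ← hW a p,
        map_sum]
      exact Finset.sum_congr rfl fun j _ => (map_mul _ _ _).symm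
    simp only [mul_sub, Finset.sum_sub_distrib]
    rw [sub_eq_zero]
    refine Eq.symm ?_
    calc ∑ j, algebraMap R A (B a j) * ∑ p, c p * algebraMap R A (W p j)
        = ∑ j, ∑ p, c p * (algebraMap R A (B a j) * algebraMap R A (W p j)) := by
          refine Finset.sum_congr rfl fun j _ => ?_
          rw [Finset.mul_sum]
          exact Finset.sum_congr rfl fun p _ => by ring
      _ = ∑ p, c p * ∑ j, algebraMap R A (B a j) * algebraMap R A (W p j) := by
          rw [Finset.sum_comm]
          exact Finset.sum_congr rfl fun p _ => by rw [Finset.mul_sum]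
      _ = c a := by simp [key, mul_ite, Finset.sum_ite_eq]
      _ = ∑ j, algebraMap R A (B a j) * y j := rfl
  have h0 := congrFun hz j0
  simp only [Pi.zero_apply, sub_eq_zero] at h0
  exact h0

end Helpers

/-- Extend an injective map `Fin a → Fin n` to an equivalence `Fin a ⊕ Fin b ≃ Fin n`. -/
lemma exists_sum_equiv {a b n : ℕ} (hab : a + b = n) (g : Fin a → Fin n)
    (hg : Function.Injective g) :
    ∃ e : Fin a ⊕ Fin b ≃ Fin n, ∀ i, e (Sum.inl i) = g i := by
  classical
  have hcard : Fintype.card ((Set.range g)ᶜ : Set (Fin n)) = b := by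
    simp only [Fintype.card_compl_set, Set.card_range_of_injective hg, Fintype.card_fin]
    omega
  let c : Fin b ≃ ((Set.range g)ᶜ : Set (Fin n)) := (Fintype.equivFinOfCardEq hcard).symm
  let f : Fin a ⊕ Fin b → Fin n := Sum.elim g fun j => (c j : Fin n)
  have hinj : Function.Injective f := by
    rintro (x | x) (y | y) hxy
    · exact congrArg Sum.inl (hg hxy)
    · exact absurd ⟨x, hxy⟩ (c y).2
    · exact absurd ⟨y, hxy.symm⟩ (c x).2
    · exact congrArg Sum.inr (c.injective (Subtype.ext hxy))
  have hbij : Function.Bijective f :=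
    (Fintype.bijective_iff_injective_and_card f).2 ⟨hinj, by simp [hab]⟩
  exact ⟨Equiv.ofBijective f hbij, fun i => rfl⟩

/-- Jacobi-type identity: if `A * Bᵀ = 1` then `det A * det B₂₂ = det A₁₁`. -/
lemma jacobi_det {R : Type*} [CommRing R] {α β : Type*} [Fintype α] [Fintype β]
    [DecidableEq α] [DecidableEq β] (A Bm : Matrix (α ⊕ β) (α ⊕ β) R)
    (h : A * Bm.transpose = 1) :
    A.det * (Bm.toBlocks₂₂).det = (A.toBlocks₁₁).det := by
  classical
  set C := Bm.transpose with hCdef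
  have hA : A = Matrix.fromBlocks A.toBlocks₁₁ A.toBlocks₁₂ A.toBlocks₂₁ A.toBlocks₂₂ :=
    (Matrix.fromBlocks_toBlocks A).symm
  have hC : C = Matrix.fromBlocks C.toBlocks₁₁ C.toBlocks₁₂ C.toBlocks₂₁ C.toBlocks₂₂ :=
    (Matrix.fromBlocks_toBlocks C).symm
  have h' : Matrix.fromBlocks
      (A.toBlocks₁₁ * C.toBlocks₁₁ + A.toBlocks₁₂ * C.toBlocks₂₁)
      (A.toBlocks₁₁ * C.toBlocks₁₂ + A.toBlocks₁₂ * C.toBlocks₂₂)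
      (A.toBlocks₂₁ * C.toBlocks₁₁ + A.toBlocks₂₂ * C.toBlocks₂₁)
      (A.toBlocks₂₁ * C.toBlocks₁₂ + A.toBlocks₂₂ * C.toBlocks₂₂)
      = Matrix.fromBlocks 1 0 0 1 := by
    rw [← Matrix.fromBlocks_multiply, ← hA, ← hC, h, Matrix.fromBlocks_one]
  have h12 : A.toBlocks₁₁ * C.toBlocks₁₂ + A.toBlocks₁₂ * C.toBlocks₂₂ = 0 := by
    have := congrArg Matrix.toBlocks₁₂ h'
    rw [Matrix.toBlocks_fromBlocks₁₂, Matrix.toBlocks_fromBlocks₁₂] at this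
    exact this
  have h22 : A.toBlocks₂₁ * C.toBlocks₁₂ + A.toBlocks₂₂ * C.toBlocks₂₂ = 1 := by
    have := congrArg Matrix.toBlocks₂₂ h'
    rw [Matrix.toBlocks_fromBlocks₂₂, Matrix.toBlocks_fromBlocks₂₂] at this
    exact this
  have key : A * Matrix.fromBlocks 1 C.toBlocks₁₂ 0 C.toBlocks₂₂
      = Matrix.fromBlocks A.toBlocks₁₁ 0 A.toBlocks₂₁ 1 := by
    conv_lhs => rw [hA]
    rw [Matrix.fromBlocks_multiply]
    rw [h12, h22]
    simp [Matrix.mul_zero, Matrix.mul_one]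
  have hdet := congrArg Matrix.det key
  rw [Matrix.det_mul, Matrix.det_fromBlocks_zero₂₁, Matrix.det_fromBlocks_zero₁₂,
    Matrix.det_one, Matrix.det_one, one_mul, mul_one] at hdet
  have hC22 : C.toBlocks₂₂ = (Bm.toBlocks₂₂).transpose := rfl
  rw [hC22, Matrix.det_transpose] at hdet
  exact hdet

/-- Multiplying a polynomial by a unit polynomial preserves the natural degree. -/
lemma natDegree_unit_mul {F : Type*} [Field F] (d p : Polynomial F) (hd : IsUnit d) :
    (d * p).natDegree = p.natDegree := by
  obtain ⟨r, hr, rfl⟩ := Polynomial.isUnit_iff.1 hd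
  exact natDegree_C_mul hr.ne_zero

lemma exists_adapted_basis {F : Type*} [Field F] {n k : ℕ} (hkn : k ≤ n)
    (G₀ : Fin k → Fin n → Polynomial F)
    (hG₀rank : LinearIndependent (Polynomial F) G₀)
    (hG₀basic : Module.Free (Polynomial F)
      ((Fin n → Polynomial F) ⧸ Submodule.span (Polynomial F) (Set.range G₀))) :
    ∃ B : Module.Basis (Fin k ⊕ Fin (n - k)) (Polynomial F) (Fin n → Polynomial F),
      ∀ i, B (Sum.inl i) = G₀ i := by
  classical
  set S : Submodule (Polynomial F) (Fin n → Polynomial F) :=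
    Submodule.span (Polynomial F) (Set.range G₀) with hS
  set Q := (Fin n → Polynomial F) ⧸ S with hQ
  haveI : Module.Free (Polynomial F) Q := hG₀basic
  haveI : Module.Finite (Polynomial F) Q :=
    Module.Finite.of_surjective S.mkQ (Submodule.mkQ_surjective S)
  obtain ⟨s, hs⟩ := Module.projective_lifting_property S.mkQ
    (LinearMap.id (R := Polynomial F) (M := Q)) (Submodule.mkQ_surjective S)
  have hs' : ∀ q : Q, S.mkQ (s q) = q := fun q => congrArg (fun f => f q)
    (congrArg (fun f => f.toFun) hs)
  have hsinj : Function.Injective s := by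
    intro q q' hqq'
    have := congrArg S.mkQ hqq'
    rwa [hs' q, hs' q'] at this
  have hcompl : IsCompl S (LinearMap.range s) := by
    constructor
    · rw [disjoint_iff]
      ext x
      simp only [Submodule.mem_inf, Submodule.mem_bot]
      constructor
      · rintro ⟨hxS, q, rfl⟩
        have : S.mkQ (s q) = 0 := (Submodule.Quotient.mk_eq_zero S).2 hxS
        rw [hs' q] at this
        rw [this, map_zero]
      · rintro rfl
        exact ⟨S.zero_mem, 0, map_zero s⟩
    · rw [codisjoint_iff, eq_top_iff]
      intro x _
      have h1 : x - s (S.mkQ x) ∈ S := by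
        rw [← Submodule.Quotient.mk_eq_zero S]
        have : S.mkQ (x - s (S.mkQ x)) = 0 := by
          rw [map_sub, hs' (S.mkQ x), sub_self]
        simpa using this
      have hxx : x = (x - s (S.mkQ x)) + s (S.mkQ x) := by ring
      rw [hxx]
      exact Submodule.add_mem_sup h1 ⟨S.mkQ x, rfl⟩
  let bS : Module.Basis (Fin k) (Polynomial F) S := Module.Basis.span hG₀rank
  let ι := Module.Free.ChooseBasisIndex (Polynomial F) Q
  let bQ : Module.Basis ι (Polynomial F) Q := Module.Free.chooseBasis (Polynomial F) Q
  let eQ : Q ≃ₗ[Polynomial F] LinearMap.range s := LinearEquiv.ofInjective s hsinj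
  let bK : Module.Basis ι (Polynomial F) (LinearMap.range s) := bQ.map eQ
  let bigB : Module.Basis (Fin k ⊕ ι) (Polynomial F) (Fin n → Polynomial F) :=
    (bS.prod bK).map (Submodule.prodEquivOfIsCompl S (LinearMap.range s) hcompl)
  have hcardι : k + Fintype.card ι = n := by
    have h1 := Module.finrank_eq_card_basis bigB
    have h2 : Module.finrank (Polynomial F) (Fin n → Polynomial F) = n := by
      rw [Module.finrank_pi, Fintype.card_fin]
    rw [h2, Fintype.card_sum, Fintype.card_fin] at h1
    omega
  let ε : ι ≃ Fin (n - k) := Fintype.equivFinOfCardEq (by omega)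
  refine ⟨bigB.reindex ((Equiv.refl (Fin k)).sumCongr ε), fun i => ?_⟩
  rw [Module.Basis.reindex_apply]
  have hsymm : ((Equiv.refl (Fin k)).sumCongr ε).symm (Sum.inl i) = Sum.inl i := rfl
  rw [hsymm]
  show ((Submodule.prodEquivOfIsCompl S (LinearMap.range s) hcompl)
    ((bS.prod bK) (Sum.inl i)) : Fin n → Polynomial F) = G₀ i
  have hp : (bS.prod bK) (Sum.inl i) = (bS i, 0) := by
    ext
    · simp [Module.Basis.prod_apply_inl_fst]
    · simp [Module.Basis.prod_apply_inl_snd]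
  rw [hp]
  have hval : ((Submodule.prodEquivOfIsCompl S (LinearMap.range s) hcompl)
      ((bS i, 0)) : Fin n → Polynomial F)
      = (bS i : Fin n → Polynomial F) + ((0 : LinearMap.range s) : Fin n → Polynomial F) := rfl
  rw [hval]
  simp only [Submodule.coe_zero, add_zero]
  exact congrArg Subtype.val (Module.Basis.span_apply hG₀rank i)


/-- The vector of rational functions obtained from a vector of polynomials. -/
noncomputable def liftVec {F : Type*} [Field F] {n : ℕ} (x : Fin n → Polynomial F) :
    Fin n → RatFunc F :=
  fun i => algebraMap (Polynomial F) (RatFunc F) (x i)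

/-- `δ_G`: the maximum of the degrees of the m×m minors of an m×n polynomial matrix G. -/
noncomputable def maxMinorDeg {F : Type*} [Field F] {k n : ℕ}
    (G : Fin k → Fin n → Polynomial F) : ℕ :=
  Finset.univ.sup fun g : Fin k → Fin n => (((Matrix.of G).submatrix id g).det).natDegree

/-- The dual code of `C ⊆ K^n` with respect to the pairing `⟨x,y⟩ = Σ_i x_i y_i`. -/
def dualCode {K : Type*} [Field K] {n : ℕ} (C : Submodule K (Fin n → K)) :
    Submodule K (Fin n → K) where
  carrier := { y | ∀ x ∈ C, ∑ i, x i * y i = 0 }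
  zero_mem' := by intro x _; simp
  add_mem' := by
    intro y y' hy hy' x hx
    simp only [Pi.add_apply, mul_add, Finset.sum_add_distrib, hy x hx, hy' x hx, add_zero]
  smul_mem' := by
    intro c y hy x hx
    have h : ∑ i, x i * (c • y) i = c * ∑ i, x i * y i := by
      rw [Finset.mul_sum]
      exact Finset.sum_congr rfl fun i _ => by
        simp [Pi.smul_apply, smul_eq_mul, mul_left_comm]
    simp only [Set.mem_setOf_eq] at *
    rw [h, hy x hx, mul_zero]

set_option maxHeartbeats 2000000 in
set_option synthInstance.maxHeartbeats 400000 in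
theorem dual_code_dimension_and_degree
    {F : Type*} [Field F] [Fintype F]
    (n k δ : ℕ) (hkn : k < n)
    (C : Submodule (RatFunc F) (Fin n → RatFunc F))
    (hC : Module.finrank (RatFunc F) C = k)
    -- C has degree δ: δ is the maximum minor degree of some (hence any) basic
    -- generator matrix G₀ of C
    (G₀ : Fin k → Fin n → Polynomial F)
    (hG₀rank : LinearIndependent (Polynomial F) G₀)
    (hG₀span : Submodule.span (RatFunc F) (Set.range fun i => liftVec (G₀ i)) = C)
    (hG₀basic : Module.Free (Polynomial F)
      ((Fin n → Polynomial F) ⧸ Submodule.span (Polynomial F) (Set.range G₀)))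
    (hδ : maxMinorDeg G₀ = δ) :
    -- C^⊥ is a convolutional code of length n and dimension n−k …
    Module.finrank (RatFunc F) (dualCode C) = n - k ∧
    -- … of the same degree δ: any basic generator matrix H of C^⊥ has
    -- maximum minor degree δ
    ∀ H : Fin (n - k) → Fin n → Polynomial F,
      LinearIndependent (Polynomial F) H →
      Submodule.span (RatFunc F) (Set.range fun l => liftVec (H l)) = dualCode C →
      Module.Free (Polynomial F)
        ((Fin n → Polynomial F) ⧸ Submodule.span (Polynomial F) (Set.range H)) →
      maxMinorDeg H = δ := by
  classical
  obtain ⟨B, hBl⟩ := exists_adapted_basis hkn.le G₀ hG₀rank hG₀basic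
  set W : (Fin k ⊕ Fin (n - k)) → Fin n → Polynomial F :=
    fun b j => B.coord b (Pi.basisFun (Polynomial F) (Fin n) j) with hWdef
  have horth : ∀ a b, ∑ j, B a j * W b j = if a = b then 1 else 0 :=
    fun a b => basis_pair_ortho B a b
  set W2 : Fin (n - k) → Fin n → Polynomial F := fun b => W (Sum.inr b) with hW2def
  have halg : Function.Injective (algebraMap (Polynomial F) (RatFunc F)) :=
    IsFractionRing.injective (Polynomial F) (RatFunc F)
  have hliftinj : Function.Injective (liftVec (F := F) (n := n)) := by
    intro v w hvw
    funext j
    exact halg (congrFun hvw j)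
  have horthK : ∀ a b, ∑ j, algebraMap (Polynomial F) (RatFunc F) (B a j) *
      algebraMap (Polynomial F) (RatFunc F) (W b j)
      = if a = b then 1 else 0 := by
    intro a b
    rw [← map_one (algebraMap (Polynomial F) (RatFunc F)),
      ← map_zero (algebraMap (Polynomial F) (RatFunc F)), ← apply_ite, ← horth a b, map_sum]
    exact Finset.sum_congr rfl fun j _ => (map_mul _ _ _).symm
  have hGmem : ∀ a, liftVec (G₀ a) ∈ C := fun a =>
    hG₀span ▸ Submodule.subset_span ⟨a, rfl⟩
  -- W2 rows are in the dual code
  have hW2dual : ∀ b, liftVec (W2 b) ∈ dualCode C := by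
    intro b
    show ∀ x ∈ C, ∑ i, x i * liftVec (W2 b) i = 0
    let L : (Fin n → RatFunc F) →ₗ[RatFunc F] RatFunc F :=
      ∑ i, liftVec (W2 b) i • LinearMap.proj i
    have hLapp : ∀ x, L x = ∑ i, x i * liftVec (W2 b) i := by
      intro x
      simp only [L, LinearMap.sum_apply, LinearMap.smul_apply, LinearMap.proj_apply,
        smul_eq_mul]
      exact Finset.sum_congr rfl fun i _ => mul_comm _ _
    have hker : C ≤ LinearMap.ker L := by
      rw [← hG₀span, Submodule.span_le]
      rintro _ ⟨a, rfl⟩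
      rw [SetLike.mem_coe, LinearMap.mem_ker, hLapp]
      have : ∑ i, liftVec (G₀ a) i * liftVec (W2 b) i
          = algebraMap (Polynomial F) (RatFunc F) (∑ j, B (Sum.inl a) j * W (Sum.inr b) j) := by
        rw [map_sum]
        refine Finset.sum_congr rfl fun j _ => ?_
        rw [map_mul]
        congr 1
        · show algebraMap (Polynomial F) (RatFunc F) (G₀ a j) = _
          rw [← hBl a]
      rw [this, horth]
      simp
    intro x hx
    rw [← hLapp]
    exact hker hx
  have hcoef_inl : ∀ y, y ∈ dualCode C → ∀ a,
      ∑ j, algebraMap (Polynomial F) (RatFunc F) (B (Sum.inl a) j) * y j = 0 := by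
    intro y hy a
    have h0 := hy (liftVec (G₀ a)) (hGmem a)
    rw [← h0]
    refine Finset.sum_congr rfl fun j _ => ?_
    congr 1
    show algebraMap (Polynomial F) (RatFunc F) (B (Sum.inl a) j) = liftVec (G₀ a) j
    rw [hBl a]
    rfl
  -- the dual code is spanned by the lifted rows of W2
  have hdualspan : dualCode C
      = Submodule.span (RatFunc F) (Set.range fun b => liftVec (W2 b)) := by
    apply le_antisymm
    · intro y hy
      have hyeq : y = ∑ b, (∑ j, algebraMap (Polynomial F) (RatFunc F) (B (Sum.inr b) j) * y j)
          • liftVec (W2 b) := by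
        funext j0
        rw [basis_pair_expand B W horth y j0, Fintype.sum_sum_type]
        have hzl : ∀ a : Fin k,
            (∑ j, algebraMap (Polynomial F) (RatFunc F) (B (Sum.inl a) j) * y j)
            * algebraMap (Polynomial F) (RatFunc F) (W (Sum.inl a) j0) = 0 := by
          intro a
          rw [hcoef_inl y hy a, zero_mul]
        rw [Finset.sum_congr rfl fun a _ => hzl a, Finset.sum_const_zero, zero_add]
        rw [Finset.sum_apply]
        exact Finset.sum_congr rfl fun b _ => by
          rw [Pi.smul_apply, smul_eq_mul]
          rfl
      rw [hyeq]
      exact Submodule.sum_mem _ fun b _ =>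
        Submodule.smul_mem _ _ (Submodule.subset_span ⟨b, rfl⟩)
    · rw [Submodule.span_le]
      rintro _ ⟨b, rfl⟩
      exact hW2dual b
  -- linear independence of the lifted rows of W2
  have hliW2K : LinearIndependent (RatFunc F) fun b => liftVec (W2 b) := by
    rw [Fintype.linearIndependent_iff]
    intro c hsum b0
    have hz : ∀ j, ∑ b, c b * algebraMap (Polynomial F) (RatFunc F) (W (Sum.inr b) j) = 0 := by
      intro j
      have := congrFun hsum j
      rw [Finset.sum_apply] at this
      simpa [Pi.smul_apply, smul_eq_mul, liftVec] using this
    have : ∑ j, algebraMap (Polynomial F) (RatFunc F) (B (Sum.inr b0) j) *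
        (∑ b, c b * algebraMap (Polynomial F) (RatFunc F) (W (Sum.inr b) j)) = c b0 := by
      calc ∑ j, algebraMap (Polynomial F) (RatFunc F) (B (Sum.inr b0) j) *
            (∑ b, c b * algebraMap (Polynomial F) (RatFunc F) (W (Sum.inr b) j))
          = ∑ j, ∑ b, c b * (algebraMap (Polynomial F) (RatFunc F) (B (Sum.inr b0) j) *
            algebraMap (Polynomial F) (RatFunc F) (W (Sum.inr b) j)) := by
            refine Finset.sum_congr rfl fun j _ => ?_
            rw [Finset.mul_sum]
            exact Finset.sum_congr rfl fun b _ => by ring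
        _ = ∑ b, c b * ∑ j, algebraMap (Polynomial F) (RatFunc F) (B (Sum.inr b0) j) *
            algebraMap (Polynomial F) (RatFunc F) (W (Sum.inr b) j) := by
            rw [Finset.sum_comm]
            exact Finset.sum_congr rfl fun b _ => by rw [Finset.mul_sum]
        _ = ∑ b, c b * (if (Sum.inr b0 : Fin k ⊕ Fin (n-k)) = Sum.inr b then 1 else 0) := by
            exact Finset.sum_congr rfl fun b _ => by rw [horthK]
        _ = c b0 := by
            simp [Sum.inr.injEq, mul_ite, Finset.sum_ite_eq]
    rw [← this]
    simp [hz]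
  constructor
  · rw [hdualspan]
    have := finrank_span_eq_card hliW2K
    rw [this, Fintype.card_fin]
  -- second part
  intro H hHli hHspan hHbasic
  set Λ : (Fin n → Polynomial F) →ₗ[Polynomial F] (Fin n → RatFunc F) :=
    LinearMap.pi fun i => (Algebra.linearMap (Polynomial F) (RatFunc F)).comp
      (LinearMap.proj i) with hΛdef
  have hΛ : ∀ v, Λ v = liftVec v := fun v => rfl
  set M : Submodule (Polynomial F) (Fin n → Polynomial F) :=
    Submodule.comap Λ ((dualCode C).restrictScalars (Polynomial F)) with hMdef
  have hmemM : ∀ v, v ∈ M ↔ liftVec v ∈ dualCode C := by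
    intro v
    rw [hMdef, Submodule.mem_comap, Submodule.restrictScalars_mem]
    exact Iff.rfl
  -- span of W2 rows over polynomials is M
  have hW2M : Submodule.span (Polynomial F) (Set.range W2) = M := by
    apply le_antisymm
    · rw [Submodule.span_le]
      rintro _ ⟨b, rfl⟩
      exact (hmemM (W2 b)).2 (hW2dual b)
    · intro v hv
      have hlv : liftVec v ∈ dualCode C := (hmemM v).1 hv
      have hcl : ∀ a, ∑ j, B (Sum.inl a) j * v j = 0 := by
        intro a
        apply halg
        rw [map_sum, map_zero]
        have := hcoef_inl (liftVec v) hlv a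
        rw [← this]
        exact Finset.sum_congr rfl fun j _ => by
          rw [map_mul]; rfl
      have hveq : v = ∑ b, (∑ j, B (Sum.inr b) j * v j) • W2 b := by
        funext j0
        have hexp := basis_pair_expand (A := Polynomial F) B W horth v j0
        simp only [Algebra.algebraMap_self, RingHom.id_apply] at hexp
        rw [hexp, Fintype.sum_sum_type]
        rw [Finset.sum_congr rfl fun a _ => by rw [hcl a, zero_mul],
          Finset.sum_const_zero, zero_add, Finset.sum_apply]
        exact Finset.sum_congr rfl fun b _ => by rw [Pi.smul_apply, smul_eq_mul]
      rw [hveq]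
      exact Submodule.sum_mem _ fun b _ =>
        Submodule.smul_mem _ _ (Submodule.subset_span ⟨b, rfl⟩)
  -- span of H rows over polynomials is M
  have hHM : Submodule.span (Polynomial F) (Set.range H) = M := by
    apply le_antisymm
    · rw [Submodule.span_le]
      rintro _ ⟨l, rfl⟩
      refine (hmemM (H l)).2 ?_
      rw [← hHspan]
      exact Submodule.subset_span ⟨l, rfl⟩
    · intro v hv
      have hlv : liftVec v ∈ Submodule.span (RatFunc F)
          (Set.range fun l => liftVec (H l)) := by
        rw [hHspan]
        exact (hmemM v).1 hv
      rw [Submodule.mem_span_range_iff_exists_fun] at hlv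
      obtain ⟨c, hc⟩ := hlv
      obtain ⟨d, hd⟩ := IsLocalization.exist_integer_multiples
        (nonZeroDivisors (Polynomial F)) Finset.univ c
      choose p hp using fun l => hd l (Finset.mem_univ l)
      have hlift : liftVec ((d : Polynomial F) • v) = liftVec (∑ l, p l • H l) := by
        funext j
        show algebraMap (Polynomial F) (RatFunc F) ((d : Polynomial F) * v j) = _
        have hrhs : liftVec (∑ l, p l • H l) j
            = ∑ l, algebraMap (Polynomial F) (RatFunc F) (p l) *
              algebraMap (Polynomial F) (RatFunc F) (H l j) := by
          show algebraMap (Polynomial F) (RatFunc F) ((∑ l, p l • H l) j) = _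
          rw [Finset.sum_apply, map_sum]
          exact Finset.sum_congr rfl fun l _ => by
            rw [Pi.smul_apply, smul_eq_mul, map_mul]
        rw [hrhs]
        have hcj := congrFun hc j
        rw [Finset.sum_apply] at hcj
        calc algebraMap (Polynomial F) (RatFunc F) ((d : Polynomial F) * v j)
            = algebraMap (Polynomial F) (RatFunc F) (d : Polynomial F) *
              algebraMap (Polynomial F) (RatFunc F) (v j) := map_mul _ _ _
          _ = algebraMap (Polynomial F) (RatFunc F) (d : Polynomial F) *
              (∑ l, c l * algebraMap (Polynomial F) (RatFunc F) (H l j)) := by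
              congr 1
              have hcj' : ∑ l, c l * algebraMap (Polynomial F) (RatFunc F) (H l j)
                  = algebraMap (Polynomial F) (RatFunc F) (v j) := by
                simpa [liftVec, Pi.smul_apply, smul_eq_mul] using hcj
              exact hcj'.symm
          _ = ∑ l, algebraMap (Polynomial F) (RatFunc F) (p l) *
              algebraMap (Polynomial F) (RatFunc F) (H l j) := by
              rw [Finset.mul_sum]
              refine Finset.sum_congr rfl fun l _ => ?_
              rw [hp l, Algebra.smul_def, mul_assoc]
      have hdv : (d : Polynomial F) • v ∈ Submodule.span (Polynomial F) (Set.range H) := by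
        rw [hliftinj hlift]
        exact Submodule.sum_mem _ fun l _ =>
          Submodule.smul_mem _ _ (Submodule.subset_span ⟨l, rfl⟩)
      haveI := hHbasic
      have hq : (d : Polynomial F) • (Submodule.Quotient.mk v :
          (Fin n → Polynomial F) ⧸ Submodule.span (Polynomial F) (Set.range H)) = 0 := by
        rw [← Submodule.Quotient.mk_smul, Submodule.Quotient.mk_eq_zero]
        exact hdv
      rcases smul_eq_zero.mp hq with h1 | h2
      · exact absurd h1 (nonZeroDivisors.ne_zero d.prop)
      · exact (Submodule.Quotient.mk_eq_zero _).1 h2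
  -- change of basis between H and W2
  have hHmem : ∀ i, H i ∈ Submodule.span (Polynomial F) (Set.range W2) := by
    intro i
    rw [hW2M, ← hHM]
    exact Submodule.subset_span ⟨i, rfl⟩
  have hW2mem : ∀ l, W2 l ∈ Submodule.span (Polynomial F) (Set.range H) := by
    intro l
    rw [hHM, ← hW2M]
    exact Submodule.subset_span ⟨l, rfl⟩
  choose T hT using fun i => (Submodule.mem_span_range_iff_exists_fun (Polynomial F)).1 (hHmem i)
  choose Sm hSm using fun l => (Submodule.mem_span_range_iff_exists_fun (Polynomial F)).1 (hW2mem l)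
  have hTS : Matrix.of T * Matrix.of Sm = 1 := by
    rw [← Matrix.ext_iff]
    intro i m
    have hcomb : ∑ m', (∑ l, T i l * Sm l m') • H m' = H i := by
      calc ∑ m', (∑ l, T i l * Sm l m') • H m'
          = ∑ m', ∑ l, (T i l * Sm l m') • H m' := by
            exact Finset.sum_congr rfl fun m' _ => by rw [Finset.sum_smul]
        _ = ∑ l, T i l • (∑ m', Sm l m' • H m') := by
            rw [Finset.sum_comm]
            refine Finset.sum_congr rfl fun l _ => ?_
            rw [Finset.smul_sum]
            exact Finset.sum_congr rfl fun m' _ => by rw [smul_smul]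
        _ = ∑ l, T i l • W2 l := by
            exact Finset.sum_congr rfl fun l _ => by rw [hSm l]
        _ = H i := hT i
    have hzero : ∑ m', ((∑ l, T i l * Sm l m') - (if i = m' then 1 else 0)) • H m' = 0 := by
      rw [Finset.sum_congr rfl fun m' _ => sub_smul _ _ (H m'), Finset.sum_sub_distrib,
        hcomb]
      simp [ite_smul, Finset.sum_ite_eq]
    have := (Fintype.linearIndependent_iff.1 hHli) _ hzero m
    have h0 : (∑ l, T i l * Sm l m) - (if i = m then 1 else 0) = 0 := this
    rw [Matrix.mul_apply, Matrix.one_apply]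
    simp only [Matrix.of_apply]
    exact sub_eq_zero.mp h0
  have hdetT : IsUnit (Matrix.of T).det :=
    IsUnit.of_mul_eq_one _ (by rw [← Matrix.det_mul, hTS, Matrix.det_one])
  have hmmHW2 : maxMinorDeg H = maxMinorDeg W2 := by
    unfold maxMinorDeg
    refine Finset.sup_congr rfl fun g _ => ?_
    have hfac : (Matrix.of H).submatrix id g
        = Matrix.of T * (Matrix.of W2).submatrix id g := by
      rw [← Matrix.ext_iff]
      intro i q
      rw [Matrix.mul_apply]
      simp only [Matrix.submatrix_apply, Matrix.of_apply, id_eq]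
      have := congrFun (hT i).symm (g q)
      rw [Finset.sum_apply] at this
      rw [this]
      exact Finset.sum_congr rfl fun l _ => by rw [Pi.smul_apply, smul_eq_mul]
    rw [hfac, Matrix.det_mul, natDegree_unit_mul _ _ hdetT]
  -- minor correspondence between G₀ and W2
  have hminor : ∀ e : (Fin k ⊕ Fin (n - k)) ≃ Fin n,
      ∃ u : Polynomial F, IsUnit u ∧
        ((Matrix.of G₀).submatrix id fun q => e (Sum.inl q)).det
          = u * ((Matrix.of W2).submatrix id fun q => e (Sum.inr q)).det := by
    intro e
    let A : Matrix (Fin k ⊕ Fin (n - k)) (Fin k ⊕ Fin (n - k)) (Polynomial F) :=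
      fun p q => B p (e q)
    let Bm : Matrix (Fin k ⊕ Fin (n - k)) (Fin k ⊕ Fin (n - k)) (Polynomial F) :=
      fun p q => W p (e q)
    have hABt : A * Bm.transpose = 1 := by
      rw [← Matrix.ext_iff]
      intro p r
      rw [Matrix.mul_apply, Matrix.one_apply]
      have : ∀ q, A p q * Bm.transpose q r = B p (e q) * W r (e q) := fun q => rfl
      rw [Finset.sum_congr rfl fun q _ => this q]
      exact (Equiv.sum_comp e fun j => B p j * W r j).trans (horth p r)
    have hJ := jacobi_det A Bm hABt
    have hA11 : A.toBlocks₁₁ = (Matrix.of G₀).submatrix id fun q => e (Sum.inl q) := by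
      rw [← Matrix.ext_iff]
      intro i q
      show B (Sum.inl i) (e (Sum.inl q)) = G₀ i (e (Sum.inl q))
      rw [hBl i]
    have hB22 : Bm.toBlocks₂₂ = (Matrix.of W2).submatrix id fun q => e (Sum.inr q) := rfl
    have hdetA : IsUnit A.det := by
      let Bn : Module.Basis (Fin n) (Polynomial F) (Fin n → Polynomial F) := B.reindex e
      haveI := Module.Basis.invertibleToMatrix (Pi.basisFun (Polynomial F) (Fin n)) Bn
      have hD : IsUnit ((Pi.basisFun (Polynomial F) (Fin n)).toMatrix ⇑Bn).det :=
        (Matrix.isUnit_iff_isUnit_det _).1 (isUnit_of_invertible _)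
      have hADt : A = (((Pi.basisFun (Polynomial F) (Fin n)).toMatrix
          ⇑Bn).transpose).submatrix ⇑e ⇑e := by
        rw [← Matrix.ext_iff]
        intro p q
        rw [Matrix.submatrix_apply, Matrix.transpose_apply, Module.Basis.toMatrix_apply,
          Pi.basisFun_repr]
        show B p (e q) = (Bn (e p)) (e q)
        rw [Module.Basis.reindex_apply, Equiv.symm_apply_apply]
      rw [hADt, Matrix.det_submatrix_equiv_self e, Matrix.det_transpose]
      exact hD
    exact ⟨A.det, hdetA, by rw [← hA11, ← hB22, ← hJ]⟩
  have hGW2 : maxMinorDeg G₀ = maxMinorDeg W2 := by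
    unfold maxMinorDeg
    apply le_antisymm
    · refine Finset.sup_le fun g _ => ?_
      by_cases h0 : ((Matrix.of G₀).submatrix id g).det = 0
      · rw [h0, natDegree_zero]
        exact Nat.zero_le _
      · have hginj : Function.Injective g := by
          by_contra hni
          obtain ⟨a, b, hgab, hab⟩ := Function.not_injective_iff.1 hni
          exact h0 (Matrix.det_zero_of_column_eq hab fun r => by
            simp [Matrix.submatrix_apply, hgab])
        obtain ⟨e, he⟩ := exists_sum_equiv (by omega : k + (n - k) = n) g hginj
        obtain ⟨u, hu, heq⟩ := hminor e
        have hge : (fun q => e (Sum.inl q)) = g := funext he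
        rw [hge] at heq
        rw [heq, natDegree_unit_mul _ _ hu]
        exact Finset.le_sup
          (f := fun g' => (((Matrix.of W2).submatrix id g').det).natDegree)
          (Finset.mem_univ fun q => e (Sum.inr q))
    · refine Finset.sup_le fun h _ => ?_
      by_cases h0 : ((Matrix.of W2).submatrix id h).det = 0
      · rw [h0, natDegree_zero]
        exact Nat.zero_le _
      · have hhinj : Function.Injective h := by
          by_contra hni
          obtain ⟨a, b, hgab, hab⟩ := Function.not_injective_iff.1 hni
          exact h0 (Matrix.det_zero_of_column_eq hab fun r => by
            simp [Matrix.submatrix_apply, hgab])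
        obtain ⟨e', he'⟩ := exists_sum_equiv (by omega : (n - k) + k = n) h hhinj
        let e : (Fin k ⊕ Fin (n - k)) ≃ Fin n :=
          (Equiv.sumComm (Fin k) (Fin (n - k))).trans e'
        obtain ⟨u, hu, heq⟩ := hminor e
        have hhe : (fun q => e (Sum.inr q)) = h := funext fun q => he' q
        rw [hhe] at heq
        have : (((Matrix.of W2).submatrix id h).det).natDegree
            = (((Matrix.of G₀).submatrix id fun q => e (Sum.inl q)).det).natDegree := by
          rw [heq, natDegree_unit_mul _ _ hu]
        rw [this]
        exact Finset.le_sup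
          (f := fun g' => (((Matrix.of G₀).submatrix id g').det).natDegree)
          (Finset.mem_univ fun q => e (Sum.inl q))
  rw [hmmHW2, ← hGW2, hδ]
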